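/- Let t ≥ 2 and s ≥ 0 be integers, let n ≥ t + 2s + 3, and let p be real with 0 < p ≤ 1/2; set q := 1 − p and α := p/q. Let A, B ⊆ 2^[n] be shifted, inclusion maximal, cross t-intersecting families, suppose D_s^t(1) ∈ A, let i_max := n − t − 2s − 1 and I := max{ i : 1 ≤ i ≤ i_max, D_s^t(i) ∈ A }. If I ≠ i_max, then (1) μ_p(F_s^t \ A) ≥ C(t+s−1, s)·p^{t+s}·q^{s+I+1}·(1 − α), and (2) μ_p(B \ F_s^t) ≤ α^{t+I}. -/

import Mathlib

open Finset

open scoped Classical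

noncomputable section

/-- The `p`-weight of a family of subsets of `[n] = {1,…,n}`. -/
def mu (n : ℕ) (p : ℝ) (𝓕 : Finset (Finset ℕ)) : ℝ :=
  ∑ F ∈ 𝓕, p ^ F.card * (1 - p) ^ (n - F.card)

/-- Two families are cross `t`-intersecting. -/
def CrossIntersecting (t : ℕ) (𝓐 𝓑 : Finset (Finset ℕ)) : Prop :=
  ∀ A ∈ 𝓐, ∀ B ∈ 𝓑, t ≤ (A ∩ B).card

/-- The Frankl family `F_i^ℓ = {F ⊆ [n] : |F ∩ [ℓ+2i]| ≥ ℓ+i}`. -/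
def FF (n ℓ i : ℕ) : Finset (Finset ℕ) :=
  (Finset.Icc 1 n).powerset.filter fun F => ℓ + i ≤ (F ∩ Finset.Icc 1 (ℓ + 2 * i)).card

/-- `F` reaches level `ℓ`: there is `0 ≤ j ≤ n` with `2|F ∩ [j]| ≥ j + ℓ`. -/
def Reaches (n ℓ : ℕ) (F : Finset ℕ) : Prop :=
  ∃ j ≤ n, j + ℓ ≤ 2 * (F ∩ Finset.Icc 1 j).card

/-- The number of steps `0 ≤ j ≤ n` at which `F` hits level `ℓ`, i.e. `2|F ∩ [j]| = j + ℓ`. -/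
def hitCount (n ℓ : ℕ) (F : Finset ℕ) : ℕ :=
  ((Finset.range (n + 1)).filter fun j => 2 * (F ∩ Finset.Icc 1 j).card = j + ℓ).card

/-- `F^ℓ`: all subsets of `[n]` reaching level `ℓ`. -/
def Fwalk (n ℓ : ℕ) : Finset (Finset ℕ) :=
  (Finset.Icc 1 n).powerset.filter fun F => Reaches n ℓ F

/-- `tilde F^ℓ`: all subsets of `[n]` reaching level `ℓ+1`. -/
def Ftilde (n ℓ : ℕ) : Finset (Finset ℕ) :=
  (Finset.Icc 1 n).powerset.filter fun F => Reaches n (ℓ + 1) F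

/-- `hat F^ℓ`: subsets not reaching level `ℓ+1` and hitting level `ℓ` exactly once. -/
def Fhat (n ℓ : ℕ) : Finset (Finset ℕ) :=
  (Finset.Icc 1 n).powerset.filter fun F => ¬ Reaches n (ℓ + 1) F ∧ hitCount n ℓ F = 1

/-- `ddot F^ℓ`: subsets not reaching level `ℓ+1` and hitting level `ℓ` at least twice. -/
def Fddot (n ℓ : ℕ) : Finset (Finset ℕ) :=
  (Finset.Icc 1 n).powerset.filter fun F => ¬ Reaches n (ℓ + 1) F ∧ 2 ≤ hitCount n ℓ F

/-- The `(i,j)`-shift of a single set `F`, relative to the family `𝓕`. -/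
def shiftSet (i j : ℕ) (𝓕 : Finset (Finset ℕ)) (F : Finset ℕ) : Finset ℕ :=
  if j ∈ F ∧ i ∉ F ∧ insert i (F.erase j) ∉ 𝓕 then insert i (F.erase j) else F

/-- The `(i,j)`-shift `s_{ij}(𝓕)` of a family `𝓕`. -/
def shiftFam (i j : ℕ) (𝓕 : Finset (Finset ℕ)) : Finset (Finset ℕ) :=
  𝓕.image (shiftSet i j 𝓕)

/-- A family is shifted if all shifts `s_{ij}`, `1 ≤ i < j ≤ n`, fix it. -/
def Shifted (n : ℕ) (𝓕 : Finset (Finset ℕ)) : Prop :=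
  ∀ i j : ℕ, 1 ≤ i → i < j → j ≤ n → shiftFam i j 𝓕 = 𝓕

/-- A family of subsets of `[n]` is inclusion maximal. -/
def InclMax (n : ℕ) (𝓕 : Finset (Finset ℕ)) : Prop :=
  ∀ F ∈ 𝓕, ∀ F' : Finset ℕ, F ⊆ F' → F' ⊆ Finset.Icc 1 n → F' ∈ 𝓕

/-- `λ(𝓕)`: the largest `λ ≥ 0` such that every member of `𝓕` reaches level `λ`. -/
def lam (n : ℕ) (𝓕 : Finset (Finset ℕ)) : ℕ :=
  Nat.findGreatest (fun ℓ => ∀ F ∈ 𝓕, Reaches n ℓ F) n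

/-- Two families of subsets of `[n]` are isomorphic via a permutation of `[n]`. -/
def Isom (n : ℕ) (𝓖₁ 𝓖₂ : Finset (Finset ℕ)) : Prop :=
  ∃ σ : Equiv.Perm ℕ, (∀ k ∈ Finset.Icc 1 n, σ k ∈ Finset.Icc 1 n) ∧
    𝓖₁ = 𝓖₂.image fun G => G.image σ

/-- The quantity `f(ℓ, i, p)` from Ahlswede–Khachatrian type estimates. -/
def fLP (ℓ i : ℕ) (p : ℝ) : ℝ :=
  (p / (1 - p)) ^ (ℓ + 1) +
    (Nat.choose (ℓ + 2 * i) i : ℝ) * ((ℓ + 1 : ℝ) / (ℓ + i + 1)) * p ^ (ℓ + i) *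
      (1 - p) ^ i * (1 - p / (1 - p))

/-- The walk `D_s^t(i) = [t−1] ∪ {t+s,…,t+2s} ∪ {t+2s+i+2k : k ≥ 1} ∩ [n]`. -/
def DD (n t s i : ℕ) : Finset ℕ :=
  Finset.Icc 1 (t - 1) ∪ Finset.Icc (t + s) (t + 2 * s) ∪
    ((Finset.Icc 1 n).filter fun m => ∃ k ∈ Finset.Icc 1 n, m = t + 2 * s + i + 2 * k)

end

noncomputable section StatementSixAux

open Finset

/- ### generic sum / card helpers -/

lemma st6_wsum_one (p : ℝ) :
    ∀ s : Finset ℕ, (∑ F ∈ s.powerset, p ^ F.card * (1-p) ^ (s.card - F.card)) = 1 := by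
  intro s
  induction s using Finset.induction_on with
  | empty => simp
  | @insert a s ha ih =>
    rw [Finset.sum_powerset_insert ha]
    have h1 : ∀ F ∈ s.powerset, p ^ F.card * (1-p) ^ ((insert a s).card - F.card)
        = (1-p) * (p ^ F.card * (1-p) ^ (s.card - F.card)) := by
      intro F hF
      rw [Finset.card_insert_of_notMem ha]
      have hc : F.card ≤ s.card := Finset.card_le_card (Finset.mem_powerset.mp hF)
      rw [show s.card + 1 - F.card = (s.card - F.card) + 1 by omega]
      ring
    have h2 : ∀ F ∈ s.powerset, p ^ (insert a F).card * (1-p) ^ ((insert a s).card - (insert a F).card)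
        = p * (p ^ F.card * (1-p) ^ (s.card - F.card)) := by
      intro F hF
      have haF : a ∉ F := fun h => ha (Finset.mem_powerset.mp hF h)
      rw [Finset.card_insert_of_notMem ha, Finset.card_insert_of_notMem haF]
      have hc : F.card ≤ s.card := Finset.card_le_card (Finset.mem_powerset.mp hF)
      rw [show s.card + 1 - (F.card + 1) = s.card - F.card by omega]
      ring
    rw [Finset.sum_congr rfl h1, Finset.sum_congr rfl h2, ← Finset.mul_sum, ← Finset.mul_sum, ih]
    ring

lemma st6_pf_split (F : Finset ℕ) {m x : ℕ} (h : m ≤ x) :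
    (F ∩ Finset.Icc 1 x).card = (F ∩ Finset.Icc 1 m).card + (F ∩ Finset.Icc (m+1) x).card := by
  have hu : F ∩ Finset.Icc 1 x = (F ∩ Finset.Icc 1 m) ∪ (F ∩ Finset.Icc (m+1) x) := by
    ext y; simp only [Finset.mem_inter, Finset.mem_union, Finset.mem_Icc]
    constructor
    · rintro ⟨hy, h1, h2⟩
      by_cases hc : y ≤ m
      · exact Or.inl ⟨hy, h1, hc⟩
      · exact Or.inr ⟨hy, by omega, h2⟩
    · rintro (⟨hy, h1, h2⟩ | ⟨hy, h1, h2⟩)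
      · exact ⟨hy, h1, by omega⟩
      · exact ⟨hy, by omega, h2⟩
  have hd : Disjoint (F ∩ Finset.Icc 1 m) (F ∩ Finset.Icc (m+1) x) := by
    rw [Finset.disjoint_left]
    intro y hy hy'
    simp only [Finset.mem_inter, Finset.mem_Icc] at hy hy'
    omega
  rw [hu, Finset.card_union_of_disjoint hd]

lemma st6_card_inter_Icc_le (F : Finset ℕ) (a b : ℕ) :
    (F ∩ Finset.Icc a b).card ≤ b + 1 - a := by
  have h : F ∩ Finset.Icc a b ⊆ Finset.Icc a b := Finset.inter_subset_right
  have h2 := Finset.card_le_card h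
  rwa [Nat.card_Icc] at h2

lemma st6_pf_le (F : Finset ℕ) (m : ℕ) : (F ∩ Finset.Icc 1 m).card ≤ m := by
  have := st6_card_inter_Icc_le F 1 m; omega

lemma st6_pf_mono (F : Finset ℕ) {m m' : ℕ} (h : m ≤ m') :
    (F ∩ Finset.Icc 1 m).card ≤ (F ∩ Finset.Icc 1 m').card :=
  Finset.card_le_card (Finset.inter_subset_inter (le_refl F) (Finset.Icc_subset_Icc_right h))

lemma st6_pf_le_add (F : Finset ℕ) (m m' : ℕ) :
    (F ∩ Finset.Icc 1 m).card ≤ (F ∩ Finset.Icc 1 m').card + (m - m') := by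
  rcases le_total m m' with h | h
  · have := st6_pf_mono F h; omega
  · have h1 := st6_pf_split F h
    have h2 := st6_card_inter_Icc_le F (m'+1) m
    omega

lemma st6_inter_high {F : Finset ℕ} {a b m : ℕ} (ha : 1 ≤ a) (hF : F ⊆ Finset.Icc a b) :
    F ∩ Finset.Icc 1 m = F ∩ Finset.Icc a m := by
  ext y; simp only [Finset.mem_inter, Finset.mem_Icc]
  constructor
  · rintro ⟨hy, h1, h2⟩
    have := hF hy; simp only [Finset.mem_Icc] at this
    exact ⟨hy, this.1, h2⟩
  · rintro ⟨hy, h1, h2⟩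
    have h3 := hF hy; simp only [Finset.mem_Icc] at h3
    exact ⟨hy, by omega, h2⟩


/-- reach predicate on ground interval `[a,b]` at level `ℓ`. -/
def RP (a b ℓ : ℕ) (F : Finset ℕ) : Prop :=
  ∃ j ∈ Finset.Icc a b, j + 1 + ℓ ≤ 2 * (F ∩ Finset.Icc a j).card + a

/-- weight of reaching sets. -/
def SW (p : ℝ) (a b ℓ : ℕ) : ℝ :=
  ∑ F ∈ (Finset.Icc a b).powerset,
    if RP a b ℓ F then p ^ F.card * (1-p) ^ (b + 1 - a - F.card) else 0

lemma inter_shift {a b j : ℕ} {t : Finset ℕ} (ht : t ⊆ Finset.Icc (a+1) b) :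
    t ∩ Finset.Icc a j = t ∩ Finset.Icc (a+1) j := by
  ext x; simp only [Finset.mem_inter, Finset.mem_Icc]
  have hx' : x ∈ t → a+1 ≤ x ∧ x ≤ b := fun hx => by simpa [Finset.mem_Icc] using ht hx
  constructor
  · rintro ⟨hx, h1, h2⟩; exact ⟨hx, (hx' hx).1, h2⟩
  · rintro ⟨hx, h1, h2⟩; exact ⟨hx, by omega, h2⟩

lemma inter_shift_insert {a b j : ℕ} {t : Finset ℕ} (ht : t ⊆ Finset.Icc (a+1) b)
    (hj : a ≤ j) :
    ((insert a t) ∩ Finset.Icc a j).card = (t ∩ Finset.Icc (a+1) j).card + 1 := by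
  have heq : (insert a t) ∩ Finset.Icc a j = insert a (t ∩ Finset.Icc (a+1) j) := by
    ext x; simp only [Finset.mem_inter, Finset.mem_insert, Finset.mem_Icc]
    have hx' : x ∈ t → a+1 ≤ x ∧ x ≤ b := fun hx => by simpa [Finset.mem_Icc] using ht hx
    constructor
    · rintro ⟨hx, h1, h2⟩
      rcases hx with rfl | hx
      · exact Or.inl rfl
      · exact Or.inr ⟨hx, (hx' hx).1, h2⟩
    · rintro (rfl | ⟨hx, h1, h2⟩)
      · exact ⟨Or.inl rfl, le_refl _, hj⟩
      · exact ⟨Or.inr hx, by omega, h2⟩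
  rw [heq, Finset.card_insert_of_notMem]
  intro h
  have h2 := ht (Finset.mem_inter.mp h).1
  simp only [Finset.mem_Icc] at h2
  omega

lemma RP_out {a b ℓ : ℕ} {t : Finset ℕ} (ht : t ⊆ Finset.Icc (a+1) b) :
    RP a b ℓ t ↔ RP (a+1) b (ℓ+1) t := by
  constructor
  · rintro ⟨j, hj, hc⟩
    simp only [Finset.mem_Icc] at hj
    rcases Nat.eq_or_lt_of_le hj.1 with heq | hlt
    · exfalso
      have hempty : t ∩ Finset.Icc a j = ∅ := by
        ext x; simp only [Finset.mem_inter, Finset.mem_Icc, Finset.notMem_empty,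
          iff_false, not_and]
        intro hx; have := ht hx; simp [Finset.mem_Icc] at this; omega
      rw [hempty] at hc; simp at hc; omega
    · refine ⟨j, by simp [Finset.mem_Icc]; omega, ?_⟩
      rw [← inter_shift ht]; omega
  · rintro ⟨j, hj, hc⟩
    simp only [Finset.mem_Icc] at hj
    refine ⟨j, by simp [Finset.mem_Icc]; omega, ?_⟩
    rw [inter_shift ht]; omega

lemma RP_in {a b ℓ : ℕ} {t : Finset ℕ} (ht : t ⊆ Finset.Icc (a+1) b) :
    RP a b (ℓ+2) (insert a t) ↔ RP (a+1) b (ℓ+1) t := by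
  constructor
  · rintro ⟨j, hj, hc⟩
    simp only [Finset.mem_Icc] at hj
    rcases Nat.eq_or_lt_of_le hj.1 with heq | hlt
    · exfalso
      have h1 : ((insert a t) ∩ Finset.Icc a j).card ≤ 1 := by
        refine le_trans (Finset.card_le_card Finset.inter_subset_right) ?_
        rw [Nat.card_Icc]; omega
      omega
    · refine ⟨j, by simp [Finset.mem_Icc]; omega, ?_⟩
      rw [inter_shift_insert ht hj.1] at hc; omega
  · rintro ⟨j, hj, hc⟩
    simp only [Finset.mem_Icc] at hj
    refine ⟨j, by simp [Finset.mem_Icc]; omega, ?_⟩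
    rw [inter_shift_insert ht (by omega)]; omega

lemma RP_in_one {a b : ℕ} (t : Finset ℕ) (hab : a ≤ b) :
    RP a b 1 (insert a t) := by
  refine ⟨a, by simp [Finset.mem_Icc, hab], ?_⟩
  have hmem : a ∈ (insert a t) ∩ Finset.Icc a a := by simp
  have h1 : 1 ≤ ((insert a t) ∩ Finset.Icc a a).card := Finset.card_pos.mpr ⟨a, hmem⟩
  omega

set_option linter.unusedSectionVars false

lemma SW_def (p : ℝ) (a b ℓ : ℕ) : SW p a b ℓ =
  ∑ F ∈ (Finset.Icc a b).powerset,
    if RP a b ℓ F then p ^ F.card * (1-p) ^ (b + 1 - a - F.card) else 0 := rfl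

lemma RP_empty_ground {a b ℓ : ℕ} (h : b < a) (F : Finset ℕ) : ¬ RP a b ℓ F := by
  rintro ⟨j, hj, _⟩
  simp only [Finset.mem_Icc] at hj
  omega

section
variable {p : ℝ} (hp : 0 < p) (hp' : p ≤ 1/2)
include hp hp'

lemma hq : (0:ℝ) < 1 - p := by linarith

lemma SW_empty {a b : ℕ} (hba : b < a) (ℓ : ℕ) : SW p a b ℓ = 0 := by
  rw [SW_def]
  have h : ∀ F ∈ (Finset.Icc a b).powerset,
      (if RP a b ℓ F then p ^ F.card * (1-p) ^ (b + 1 - a - F.card) else 0) = 0 := by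
    intro F _; rw [if_neg (RP_empty_ground hba F)]
  rw [Finset.sum_congr rfl h, Finset.sum_const, smul_zero]

/-- the key splitting of SW -/
lemma SW_split {a b : ℕ} (hab : a ≤ b) (ℓ : ℕ) :
    SW p a b ℓ = (1-p) * SW p (a+1) b (ℓ+1) +
      (∑ t ∈ (Finset.Icc (a+1) b).powerset,
        if RP a b ℓ (insert a t) then p ^ (t.card+1) * (1-p) ^ (b - a - t.card) else 0) := by
  have ha : a ∉ Finset.Icc (a+1) b := by simp [Finset.mem_Icc]
  have hsplit : Finset.Icc a b = insert a (Finset.Icc (a+1) b) := by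
    ext x; simp [Finset.mem_Icc, Finset.mem_insert]; omega
  rw [SW_def, hsplit, Finset.sum_powerset_insert ha]
  congr 1
  · rw [SW_def, Finset.mul_sum]
    refine Finset.sum_congr rfl fun t htm => ?_
    have htsub := Finset.mem_powerset.mp htm
    have hcard : t.card ≤ b - a := by
      have := Finset.card_le_card htsub
      rwa [Nat.card_Icc, show b + 1 - (a+1) = b - a by omega] at this
    rw [if_congr (RP_out htsub) rfl rfl, show b + 1 - (a+1) = b - a from by omega]
    split
    · rw [show b + 1 - a - t.card = (b - a - t.card) + 1 by omega]
      ring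
    · ring
  · refine Finset.sum_congr rfl fun t htm => ?_
    have htsub := Finset.mem_powerset.mp htm
    have hat : a ∉ t := fun h => ha (htsub h)
    have hcard : t.card ≤ b - a := by
      have := Finset.card_le_card htsub
      rwa [Nat.card_Icc, show b + 1 - (a+1) = b - a by omega] at this
    rw [Finset.card_insert_of_notMem hat,
      show b + 1 - a - (t.card + 1) = b - a - t.card by omega]

lemma sum_ones (a b : ℕ) :
    (∑ t ∈ (Finset.Icc (a+1) b).powerset, p ^ t.card * (1-p) ^ (b - a - t.card)) = 1 := by
  have h := st6_wsum_one p (Finset.Icc (a+1) b)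
  rwa [Nat.card_Icc, show b + 1 - (a+1) = b - a by omega] at h

lemma sum2_le (a b ℓ : ℕ) :
    (∑ t ∈ (Finset.Icc (a+1) b).powerset,
        if RP a b ℓ (insert a t) then p ^ (t.card+1) * (1-p) ^ (b - a - t.card) else 0)
      ≤ p * 1 := by
  have h : (∑ t ∈ (Finset.Icc (a+1) b).powerset,
        if RP a b ℓ (insert a t) then p ^ (t.card+1) * (1-p) ^ (b - a - t.card) else 0)
      ≤ p * (∑ t ∈ (Finset.Icc (a+1) b).powerset, p ^ t.card * (1-p) ^ (b - a - t.card)) := by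
    rw [Finset.mul_sum]
    refine Finset.sum_le_sum fun t _ => ?_
    split
    · exact le_of_eq (by ring)
    · exact mul_nonneg (le_of_lt hp)
        (mul_nonneg (pow_nonneg (le_of_lt hp) _) (pow_nonneg (le_of_lt (hq hp hp')) _))
  rw [sum_ones hp hp' a b] at h
  exact h

lemma sum2_eq (a b k : ℕ) :
    (∑ t ∈ (Finset.Icc (a+1) b).powerset,
        if RP a b (k+2) (insert a t) then p ^ (t.card+1) * (1-p) ^ (b - a - t.card) else 0)
      = p * SW p (a+1) b (k+1) := by
  rw [SW_def, Finset.mul_sum]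
  refine Finset.sum_congr rfl fun t htm => ?_
  have htsub := Finset.mem_powerset.mp htm
  rw [if_congr (RP_in htsub) rfl rfl, show b + 1 - (a+1) = b - a from by omega]
  split
  · ring
  · ring

lemma SW_le : ∀ d a b ℓ, b + 1 - a ≤ d → 1 ≤ ℓ → SW p a b ℓ ≤ (p/(1-p))^ℓ := by
  intro d
  induction d with
  | zero =>
    intro a b ℓ hd hℓ
    rw [SW_empty hp hp' (by omega) ℓ]
    exact pow_nonneg (le_of_lt (div_pos hp (hq hp hp'))) _
  | succ d ih =>
    intro a b ℓ hd hℓ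
    by_cases hab : a ≤ b
    · rw [SW_split hp hp' hab]
      have hq0 : (0:ℝ) < 1 - p := hq hp hp'
      have hS1 : SW p (a+1) b (ℓ+1) ≤ (p/(1-p))^(ℓ+1) := ih (a+1) b (ℓ+1) (by omega) (by omega)
      have h1 : (1-p) * SW p (a+1) b (ℓ+1) ≤ (1-p) * (p/(1-p))^(ℓ+1) :=
        mul_le_mul_of_nonneg_left hS1 (le_of_lt hq0)
      obtain ⟨k, rfl⟩ : ∃ k, ℓ = k + 1 := ⟨ℓ - 1, by omega⟩
      rcases Nat.eq_zero_or_pos k with rfl | hk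
      · have hS2 := sum2_le hp hp' a b 1
        have key : (1-p) * (p/(1-p))^(0+1+1) + p * 1 = (p/(1-p))^(0+1) := by
          have h0 : (1:ℝ) - p ≠ 0 := ne_of_gt hq0
          have hx : p/(1-p)*(1-p) = p := by field_simp
          linear_combination (p/(1-p) - 1) * hx
        linarith
      · obtain ⟨k', rfl⟩ : ∃ k', k = k' + 1 := ⟨k - 1, by omega⟩
        rw [show k' + 1 + 1 = k' + 2 from rfl, sum2_eq hp hp' a b k']
        have hS3 : SW p (a+1) b (k'+1) ≤ (p/(1-p))^(k'+1) := ih (a+1) b (k'+1) (by omega) (by omega)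
        have h3 : p * SW p (a+1) b (k'+1) ≤ p * (p/(1-p))^(k'+1) :=
          mul_le_mul_of_nonneg_left hS3 (le_of_lt hp)
        have key : (1-p) * (p/(1-p))^(k'+2+1) + p * (p/(1-p))^(k'+1) = (p/(1-p))^(k'+2) := by
          have h0 : (1:ℝ) - p ≠ 0 := ne_of_gt hq0
          have hx : p/(1-p)*(1-p) = p := by field_simp
          linear_combination ((p/(1-p))^(k'+1) * (p/(1-p) - 1)) * hx
        linarith
    · rw [SW_empty hp hp' (by omega) ℓ]
      exact pow_nonneg (le_of_lt (div_pos hp (hq hp hp'))) _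

lemma SW0_le (a b : ℕ) : SW p a b 0 ≤ 2 * p := by
  by_cases hab : a ≤ b
  · rw [SW_split hp hp' hab]
    have hq0 : (0:ℝ) < 1 - p := hq hp hp'
    have hS1 : SW p (a+1) b 1 ≤ (p/(1-p))^1 :=
      SW_le hp hp' (b+1-(a+1)) (a+1) b 1 (le_refl _) (le_refl _)
    have h1 : (1-p) * SW p (a+1) b 1 ≤ (1-p) * (p/(1-p))^1 :=
      mul_le_mul_of_nonneg_left hS1 (le_of_lt hq0)
    have hS2 := sum2_le hp hp' a b 0
    have key : (1-p) * ((p/(1-p))^1) + p * 1 = 2 * p := by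
      have h0 : (1:ℝ) - p ≠ 0 := ne_of_gt hq0
      field_simp
      ring
    linarith
  · rw [SW_empty hp hp' (by omega) 0]
    linarith

end

lemma shift_mem {n : ℕ} {𝓐 : Finset (Finset ℕ)} (hS : Shifted n 𝓐) {F : Finset ℕ} {i j : ℕ}
    (hF : F ∈ 𝓐) (hi : 1 ≤ i) (hij : i < j) (hjn : j ≤ n) (hjF : j ∈ F) (hiF : i ∉ F) :
    insert i (F.erase j) ∈ 𝓐 := by
  by_cases h : insert i (F.erase j) ∈ 𝓐
  · exact h
  · have h2 : shiftSet i j 𝓐 F ∈ shiftFam i j 𝓐 := Finset.mem_image_of_mem _ hF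
    rw [hS i j hi hij hjn] at h2
    rwa [shiftSet, if_pos ⟨hjF, hiF, h⟩] at h2

lemma dom_mem {n : ℕ} {𝓐 : Finset (Finset ℕ)} (hA : 𝓐 ⊆ (Finset.Icc 1 n).powerset)
    (hS : Shifted n 𝓐) (hM : InclMax n 𝓐) :
    ∀ N A₀, A₀ ∈ 𝓐 → A₀.sum id = N → ∀ H, H ⊆ Finset.Icc 1 n →
      (∀ m, m ≤ n → (A₀ ∩ Finset.Icc 1 m).card ≤ (H ∩ Finset.Icc 1 m).card) → H ∈ 𝓐 := by
  intro N
  induction N using Nat.strong_induction_on with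
  | _ N ih =>
    intro A₀ hA₀ hsum H hH hprof
    by_cases hsub : A₀ ⊆ H
    · exact hM A₀ hA₀ H hsub hH
    · obtain ⟨x, hxA, hxH⟩ := Finset.not_subset.mp hsub
      have hA₀n : A₀ ⊆ Finset.Icc 1 n := Finset.mem_powerset.mp (hA hA₀)
      have hx := hA₀n hxA
      simp only [Finset.mem_Icc] at hx
      obtain ⟨hx1, hxn⟩ := hx
      -- profile strict at x-1
      have hsx : (A₀ ∩ Finset.Icc 1 x).card
          = (A₀ ∩ Finset.Icc 1 (x-1)).card + (A₀ ∩ Finset.Icc x x).card := by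
        have := st6_pf_split A₀ (show x - 1 ≤ x by omega)
        rwa [show x - 1 + 1 = x by omega] at this
      have hsH : (H ∩ Finset.Icc 1 x).card
          = (H ∩ Finset.Icc 1 (x-1)).card + (H ∩ Finset.Icc x x).card := by
        have := st6_pf_split H (show x - 1 ≤ x by omega)
        rwa [show x - 1 + 1 = x by omega] at this
      have hAx : (A₀ ∩ Finset.Icc x x).card = 1 := by
        have : A₀ ∩ Finset.Icc x x = {x} := by
          ext y; simp only [Finset.mem_inter, Finset.mem_Icc, Finset.mem_singleton]
          constructor
          · rintro ⟨_, h1, h2⟩; omega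
          · rintro rfl; exact ⟨hxA, le_refl _, le_refl _⟩
        rw [this, Finset.card_singleton]
      have hHx : (H ∩ Finset.Icc x x).card = 0 := by
        rw [Finset.card_eq_zero]
        ext y; simp only [Finset.mem_inter, Finset.mem_Icc, Finset.notMem_empty, iff_false,
          not_and]
        intro hy; intro h1; intro h2
        exact hxH (by rwa [show y = x by omega] at hy)
      have hlt : (A₀ ∩ Finset.Icc 1 (x-1)).card + 1 ≤ (H ∩ Finset.Icc 1 (x-1)).card := by
        have := hprof x hxn
        omega
      -- the set K of H-elements below x not in A₀
      set K := (H ∩ Finset.Icc 1 (x-1)) \ A₀ with hK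
      have hKne : K.Nonempty := by
        rw [← Finset.card_pos]
        have h1 : H ∩ Finset.Icc 1 (x-1) ⊆ K ∪ (A₀ ∩ Finset.Icc 1 (x-1)) := by
          intro y hy
          by_cases hc : y ∈ A₀
          · exact Finset.mem_union_right _
              (Finset.mem_inter.mpr ⟨hc, (Finset.mem_inter.mp hy).2⟩)
          · exact Finset.mem_union_left _ (Finset.mem_sdiff.mpr ⟨hy, hc⟩)
        have h2 := Finset.card_le_card h1
        have h3 := Finset.card_union_le K (A₀ ∩ Finset.Icc 1 (x-1))
        omega
      set i := K.max' hKne with hidef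
      have hiK : i ∈ K := K.max'_mem hKne
      have hiH : i ∈ H := (Finset.mem_inter.mp (Finset.mem_sdiff.mp hiK).1).1
      have hiA : i ∉ A₀ := (Finset.mem_sdiff.mp hiK).2
      have hix : i ≤ x - 1 := by
        have := (Finset.mem_inter.mp (Finset.mem_sdiff.mp hiK).1).2
        simp only [Finset.mem_Icc] at this; exact this.2
      have hi1 : 1 ≤ i := by
        have := hH hiH; simp only [Finset.mem_Icc] at this; exact this.1
      -- the shifted set
      set A₁ := insert i (A₀.erase x) with hA₁def
      have hA₁ : A₁ ∈ 𝓐 := shift_mem hS hA₀ hi1 (by omega) hxn hxA hiA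
      have hinE : i ∉ A₀.erase x := fun h => hiA (Finset.mem_of_mem_erase h)
      have hsum1 : A₁.sum id < N := by
        have h1 : A₁.sum id = id i + (A₀.erase x).sum id := Finset.sum_insert hinE
        have h2 : (A₀.erase x).sum id + id x = A₀.sum id := Finset.sum_erase_add A₀ id hxA
        simp only [id_eq] at h1 h2 hsum ⊢
        omega
      refine ih (A₁.sum id) hsum1 A₁ hA₁ rfl H hH ?_
      intro m hmn
      rcases lt_or_ge m i with hmi | him
      · -- m < i : A₁ ∩ [m] = A₀ ∩ [m]
        have he : A₁ ∩ Finset.Icc 1 m = A₀ ∩ Finset.Icc 1 m := by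
          ext y
          simp only [hA₁def, Finset.mem_inter, Finset.mem_insert, Finset.mem_erase,
            Finset.mem_Icc]
          constructor
          · rintro ⟨hy | ⟨hyx, hyA⟩, h1, h2⟩
            · omega
            · exact ⟨hyA, h1, h2⟩
          · rintro ⟨hyA, h1, h2⟩
            exact ⟨Or.inr ⟨by omega, hyA⟩, h1, h2⟩
        rw [he]; exact hprof m hmn
      rcases lt_or_ge m x with hmx | hxm
      · -- i ≤ m < x
        have he : A₁ ∩ Finset.Icc 1 m = insert i (A₀ ∩ Finset.Icc 1 m) := by
          ext y
          simp only [hA₁def, Finset.mem_inter, Finset.mem_insert, Finset.mem_erase,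
            Finset.mem_Icc]
          constructor
          · rintro ⟨hy | ⟨hyx, hyA⟩, h1, h2⟩
            · exact Or.inl hy
            · exact Or.inr ⟨hyA, h1, h2⟩
          · rintro (rfl | ⟨hyA, h1, h2⟩)
            · exact ⟨Or.inl rfl, hi1, by omega⟩
            · exact ⟨Or.inr ⟨by omega, hyA⟩, h1, h2⟩
        have hiAm : i ∉ A₀ ∩ Finset.Icc 1 m := fun h => hiA (Finset.mem_inter.mp h).1
        rw [he, Finset.card_insert_of_notMem hiAm]
        -- key estimate
        have e1 := st6_pf_split A₀ (show m ≤ x by omega)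
        have e2 := st6_pf_split H (show m ≤ x by omega)
        have e3 : H ∩ Finset.Icc (m+1) x ⊆ (A₀ ∩ Finset.Icc (m+1) x).erase x := by
          intro y hy
          simp only [Finset.mem_inter, Finset.mem_Icc] at hy
          obtain ⟨hyH, h1, h2⟩ := hy
          have hyx : y ≠ x := fun h => hxH (h ▸ hyH)
          have hyA : y ∈ A₀ := by
            by_contra hc
            have hyK : y ∈ K := Finset.mem_sdiff.mpr
              ⟨Finset.mem_inter.mpr ⟨hyH, Finset.mem_Icc.mpr ⟨by omega, by omega⟩⟩, hc⟩
            have := K.le_max' y hyK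
            omega
          simp only [Finset.mem_erase, Finset.mem_inter, Finset.mem_Icc]
          exact ⟨hyx, hyA, h1, h2⟩
        have e4 : x ∈ A₀ ∩ Finset.Icc (m+1) x :=
          Finset.mem_inter.mpr ⟨hxA, Finset.mem_Icc.mpr ⟨by omega, le_refl _⟩⟩
        have e5 := Finset.card_le_card e3
        rw [Finset.card_erase_of_mem e4] at e5
        have e6 : 1 ≤ (A₀ ∩ Finset.Icc (m+1) x).card := Finset.card_pos.mpr ⟨x, e4⟩
        have e7 := hprof x hxn
        omega
      · -- x ≤ m
        have hxAm : x ∈ A₀ ∩ Finset.Icc 1 m :=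
          Finset.mem_inter.mpr ⟨hxA, Finset.mem_Icc.mpr ⟨hx1, hxm⟩⟩
        have he : A₁ ∩ Finset.Icc 1 m = insert i ((A₀ ∩ Finset.Icc 1 m).erase x) := by
          ext y
          simp only [hA₁def, Finset.mem_inter, Finset.mem_insert, Finset.mem_erase,
            Finset.mem_Icc]
          constructor
          · rintro ⟨hy | ⟨hyx, hyA⟩, h1, h2⟩
            · exact Or.inl hy
            · exact Or.inr ⟨hyx, hyA, h1, h2⟩
          · rintro (rfl | ⟨hyx, hyA, h1, h2⟩)
            · exact ⟨Or.inl rfl, hi1, by omega⟩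
            · exact ⟨Or.inr ⟨hyx, hyA⟩, h1, h2⟩
        have hiAm : i ∉ (A₀ ∩ Finset.Icc 1 m).erase x := fun h =>
          hiA (Finset.mem_inter.mp (Finset.mem_of_mem_erase h)).1
        rw [he, Finset.card_insert_of_notMem hiAm, Finset.card_erase_of_mem hxAm]
        have e6 : 1 ≤ (A₀ ∩ Finset.Icc 1 m).card := Finset.card_pos.mpr ⟨x, hxAm⟩
        have := hprof m hmn
        omega

lemma st6_Icc_inter_card (a b m : ℕ) :
    (Finset.Icc a b ∩ Finset.Icc 1 m).card = min b m + 1 - max a 1 := by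
  have he : Finset.Icc a b ∩ Finset.Icc 1 m = Finset.Icc (max a 1) (min b m) := by
    ext x; simp only [Finset.mem_inter, Finset.mem_Icc]; omega
  rw [he, Nat.card_Icc]

lemma st6_P3_inter {n t s : ℕ} (i m : ℕ) (hm : m ≤ n)
    (inst : DecidablePred fun x : ℕ => ∃ k ∈ Finset.Icc 1 n, x = t + 2*s + i + 2*k) :
    ((@Finset.filter _ (fun x : ℕ => ∃ k ∈ Finset.Icc 1 n, x = t + 2*s + i + 2*k) inst
        (Finset.Icc 1 n)) ∩ Finset.Icc 1 m)
      = Finset.image (fun k => t + 2*s + i + 2*k) (Finset.Icc 1 ((m - (t + 2*s + i))/2)) := by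
  ext x
  simp only [Finset.mem_inter, Finset.mem_filter, Finset.mem_Icc, Finset.mem_image]
  constructor
  · rintro ⟨⟨⟨hx1, hxn⟩, k, ⟨hk1, hkn⟩, rfl⟩, hx1', hxm⟩
    exact ⟨k, ⟨hk1, by omega⟩, rfl⟩
  · rintro ⟨k, ⟨hk1, hk2⟩, rfl⟩
    have hdiv : 2 * ((m - (t + 2*s + i))/2) ≤ m - (t + 2*s + i) := by omega
    exact ⟨⟨⟨by omega, by omega⟩, k, ⟨hk1, by omega⟩, rfl⟩, by omega, by omega⟩

lemma st6_P3_card {n t s : ℕ} (i m : ℕ) (hm : m ≤ n)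
    (inst : DecidablePred fun x : ℕ => ∃ k ∈ Finset.Icc 1 n, x = t + 2*s + i + 2*k) :
    (((@Finset.filter _ (fun x : ℕ => ∃ k ∈ Finset.Icc 1 n, x = t + 2*s + i + 2*k) inst
        (Finset.Icc 1 n)) ∩ Finset.Icc 1 m)).card = (m - (t + 2*s + i))/2 := by
  have hinj : Function.Injective (fun k : ℕ => t + 2*s + i + 2*k) := by
    intro a b h
    simp only at h
    omega
  rw [st6_P3_inter i m hm inst, Finset.card_image_of_injective _ hinj, Nat.card_Icc]
  omega

lemma st6_DD_card {n t s : ℕ} (ht : 2 ≤ t) {i m : ℕ} (hi : 1 ≤ i) (hm : m ≤ n) :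
    (DD n t s i ∩ Finset.Icc 1 m).card
      = min (t-1) m + (min (t + 2*s) m + 1 - (t+s)) + (m - (t + 2*s + i))/2 := by
  unfold DD
  rw [Finset.union_inter_distrib_right, Finset.union_inter_distrib_right]
  have hd1 : Disjoint (Finset.Icc 1 (t-1) ∩ Finset.Icc 1 m)
      (Finset.Icc (t+s) (t+2*s) ∩ Finset.Icc 1 m) := by
    rw [Finset.disjoint_left]
    intro y hy hy'
    simp only [Finset.mem_inter, Finset.mem_Icc] at hy hy'
    omega
  have hd2 : ∀ inst2 : DecidablePred fun x : ℕ => ∃ k ∈ Finset.Icc 1 n, x = t + 2*s + i + 2*k,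
      Disjoint ((Finset.Icc 1 (t-1) ∩ Finset.Icc 1 m)
        ∪ (Finset.Icc (t+s) (t+2*s) ∩ Finset.Icc 1 m))
      ((@Finset.filter _ (fun x : ℕ => ∃ k ∈ Finset.Icc 1 n, x = t + 2*s + i + 2*k) inst2
        (Finset.Icc 1 n)) ∩ Finset.Icc 1 m) := by
    intro inst2
    rw [Finset.disjoint_left]
    intro y hy hy'
    simp only [Finset.mem_union, Finset.mem_inter, Finset.mem_filter, Finset.mem_Icc] at hy hy'
    obtain ⟨⟨_, k, ⟨hk1, _⟩, rfl⟩, _⟩ := hy'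
    rcases hy with ⟨⟨h1, h2⟩, _⟩ | ⟨⟨h1, h2⟩, _⟩ <;> omega
  rw [Finset.card_union_of_disjoint (hd2 _), Finset.card_union_of_disjoint hd1,
    st6_P3_card i m hm, st6_Icc_inter_card, st6_Icc_inter_card]
  omega

lemma st6_DD_subset {n t s : ℕ} (ht : 2 ≤ t) (h : t + 2*s ≤ n) (i : ℕ) :
    DD n t s i ⊆ Finset.Icc 1 n := by
  unfold DD
  refine Finset.union_subset (Finset.union_subset ?_ ?_) ?_
  · exact Finset.Icc_subset_Icc (le_refl 1) (by omega)
  · exact Finset.Icc_subset_Icc (by omega) (by omega)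
  · intro x hx
    simp only [Finset.mem_filter] at hx
    exact hx.1

lemma st6_mu_mono (n : ℕ) {p : ℝ} (hp : 0 < p) (hp' : p ≤ 1/2)
    {F G : Finset (Finset ℕ)} (h : F ⊆ G) : mu n p F ≤ mu n p G := by
  refine Finset.sum_le_sum_of_subset_of_nonneg h fun i _ _ => ?_
  have : (0:ℝ) < 1 - p := by linarith
  positivity

lemma st6_part2_reach (n t s I : ℕ) (ht : 2 ≤ t) (hn : t + 2*s + 3 ≤ n)
    {𝓐 𝓑 : Finset (Finset ℕ)}
    (hA : 𝓐 ⊆ (Finset.Icc 1 n).powerset) (hS : Shifted n 𝓐) (hM : InclMax n 𝓐)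
    (hcross : CrossIntersecting t 𝓐 𝓑) (hDI : DD n t s I ∈ 𝓐) (hI1 : 1 ≤ I)
    {B : Finset ℕ} (hB𝓑 : B ∈ 𝓑) (hBsub : B ⊆ Finset.Icc 1 n)
    (hBF : (B ∩ Finset.Icc 1 (t + 2*s)).card + 1 ≤ t + s) :
    Reaches n (t+I) B := by
  by_contra hNR
  simp only [Reaches] at hNR
  push_neg at hNR
  set r := Nat.findGreatest (fun r => (B ∩ Finset.Icc 1 r).card ≤ t-1) n with hrdef
  have hP0 : (B ∩ Finset.Icc 1 0).card ≤ t-1 := by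
    have h0 : Finset.Icc 1 0 = (∅ : Finset ℕ) := by
      ext y; simp [Finset.mem_Icc]
    rw [h0, Finset.inter_empty]
    simp
  have hrspec : (B ∩ Finset.Icc 1 r).card ≤ t-1 :=
    Nat.findGreatest_spec (P := fun r => (B ∩ Finset.Icc 1 r).card ≤ t-1) (Nat.zero_le n) hP0
  have hrn : r ≤ n := Nat.findGreatest_le n
  set H := (Finset.Icc 1 n \ B) ∪ (B ∩ Finset.Icc 1 r) with hHdef
  have hHsub : H ⊆ Finset.Icc 1 n := by
    refine Finset.union_subset (Finset.sdiff_subset) ?_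
    exact subset_trans Finset.inter_subset_left hBsub
  have hHB : H ∩ B = B ∩ Finset.Icc 1 r := by
    ext y
    simp only [hHdef, Finset.mem_inter, Finset.mem_union, Finset.mem_sdiff, Finset.mem_Icc]
    constructor
    · rintro ⟨⟨h1, h2⟩ | ⟨h1, h2⟩, h3⟩
      · exact absurd h3 h2
      · exact ⟨h1, h2⟩
    · rintro ⟨h1, h2⟩
      exact ⟨Or.inr ⟨h1, h2⟩, h1⟩
  have hkey : ∀ m, m ≤ n → (DD n t s I ∩ Finset.Icc 1 m).card ≤ (H ∩ Finset.Icc 1 m).card := by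
    intro m hm
    -- compute |H ∩ [m]|
    have e0 : H ∩ Finset.Icc 1 m
        = (Finset.Icc 1 m \ B) ∪ (B ∩ Finset.Icc 1 (min r m)) := by
      ext y
      simp only [hHdef, Finset.mem_inter, Finset.mem_union, Finset.mem_sdiff, Finset.mem_Icc]
      constructor
      · rintro ⟨⟨h1, h2⟩ | ⟨h1, h2⟩, h3, h4⟩
        · exact Or.inl ⟨⟨h3, h4⟩, h2⟩
        · exact Or.inr ⟨h1, by omega⟩
      · rintro (⟨⟨h1, h2⟩, h3⟩ | ⟨h1, h2⟩)
        · exact ⟨Or.inl ⟨⟨h1, by omega⟩, h3⟩, h1, h2⟩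
        · refine ⟨Or.inr ⟨h1, by omega⟩, by omega, by omega⟩
    have hdisj : Disjoint (Finset.Icc 1 m \ B) (B ∩ Finset.Icc 1 (min r m)) := by
      rw [Finset.disjoint_left]
      intro y hy hy'
      exact (Finset.mem_sdiff.mp hy).2 (Finset.mem_inter.mp hy').1
    have e1 : (H ∩ Finset.Icc 1 m).card
        = (Finset.Icc 1 m \ B).card + (B ∩ Finset.Icc 1 (min r m)).card := by
      rw [e0, Finset.card_union_of_disjoint hdisj]
    have e2 : (Finset.Icc 1 m ∩ B).card + (Finset.Icc 1 m \ B).card = m := by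
      rw [Finset.card_inter_add_card_sdiff, Nat.card_Icc]
      omega
    rw [Finset.inter_comm] at e2
    -- DD card
    have eD := st6_DD_card (n := n) (s := s) ht hI1 hm
    rcases le_or_gt m r with hmr | hrm
    · -- easy case : H ⊇ all of [m]
      have hmin : min r m = m := by omega
      rw [hmin] at e1
      have hDle := st6_pf_le (DD n t s I) m
      omega
    · have hmin : min r m = r := by omega
      rw [hmin] at e1
      -- |B ∩ [r]| = t-1
      have hgt : ¬ ((B ∩ Finset.Icc 1 (r+1)).card ≤ t-1) := by
        have h1 : Nat.findGreatest (fun r => (B ∩ Finset.Icc 1 r).card ≤ t-1) n < r + 1 := by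
          rw [← hrdef]
          omega
        exact Nat.findGreatest_is_greatest
          (P := fun r => (B ∩ Finset.Icc 1 r).card ≤ t-1) h1 (by omega)
      have hstep := st6_pf_le_add B (r+1) r
      have hBr : (B ∩ Finset.Icc 1 r).card = t-1 := by omega
      -- B facts
      have hwalk := hNR m hm
      have hmono2 := st6_pf_le_add B m (t + 2*s)
      have hle := st6_pf_le B m
      have hdiv : 2 * ((m - (t + 2*s + I))/2) ≤ m - (t + 2*s + I) := by omega
      omega
  have hHA : H ∈ 𝓐 := dom_mem hA hS hM _ (DD n t s I) hDI rfl H hHsub hkey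
  have hc := hcross H hHA B hB𝓑
  rw [hHB] at hc
  omega

end StatementSixAux

/-- the two weight estimates of Claim `B-F` in the extremal case. -/
theorem statement_6 (n t s : ℕ) (ht : 2 ≤ t) (hn : t + 2 * s + 3 ≤ n)
    (p : ℝ) (hp : 0 < p) (hp' : p ≤ 1 / 2)
    (𝓐 𝓑 : Finset (Finset ℕ))
    (hA : 𝓐 ⊆ (Finset.Icc 1 n).powerset) (hB : 𝓑 ⊆ (Finset.Icc 1 n).powerset)
    (hSA : Shifted n 𝓐) (hSB : Shifted n 𝓑)
    (hMA : InclMax n 𝓐) (hMB : InclMax n 𝓑)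
    (hcross : CrossIntersecting t 𝓐 𝓑)
    (hD1 : DD n t s 1 ∈ 𝓐)
    (I : ℕ)
    (hI : IsGreatest {i : ℕ | 1 ≤ i ∧ i ≤ n - t - 2 * s - 1 ∧ DD n t s i ∈ 𝓐} I)
    (hImax : I ≠ n - t - 2 * s - 1) :
    (Nat.choose (t + s - 1) s : ℝ) * p ^ (t + s) * (1 - p) ^ (s + I + 1) *
        (1 - p / (1 - p)) ≤ mu n p (FF n t s \ 𝓐) ∧
      mu n p (𝓑 \ FF n t s) ≤ (p / (1 - p)) ^ (t + I) := by
  have hq0 : (0:ℝ) < 1 - p := by linarith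
  obtain ⟨⟨hI1, hIle, hDI⟩, hIub⟩ := hI
  constructor
  · -- ===================== PART 1 =====================
    -- D(I+1) is not in 𝓐
    have hD' : DD n t s (I+1) ∉ 𝓐 := by
      intro hcon
      have hmem : I + 1 ∈ {i : ℕ | 1 ≤ i ∧ i ≤ n - t - 2 * s - 1 ∧ DD n t s i ∈ 𝓐} :=
        ⟨by omega, by omega, hcon⟩
      have := hIub hmem
      omega
    set AT := Finset.powersetCard (t-1) (Finset.Icc 1 (t+s-1)) with hATdef
    set AR := (Finset.Icc (t+2*s+I+1) n).powerset.filter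
      (fun R => ¬ RP (t+2*s+I+1) n 0 R) with hARdef
    set EE := (AT ×ˢ AR).image
      (fun TR : Finset ℕ × Finset ℕ => TR.1 ∪ Finset.Icc (t+s) (t+2*s) ∪ TR.2) with hEEdef
    have hTfact : ∀ T ∈ AT, T ⊆ Finset.Icc 1 (t+s-1) ∧ T.card = t-1 := by
      intro T hT; exact Finset.mem_powersetCard.mp hT
    have hRfact : ∀ R ∈ AR, R ⊆ Finset.Icc (t+2*s+I+1) n ∧ ¬ RP (t+2*s+I+1) n 0 R := by
      intro R hR
      obtain ⟨h1, h2⟩ := Finset.mem_filter.mp hR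
      exact ⟨Finset.mem_powerset.mp h1, h2⟩
    have hRprof : ∀ R ∈ AR, ∀ m, m ≤ n →
        (R ∩ Finset.Icc 1 m).card ≤ (m - (t+2*s+I+1))/2 := by
      intro R hR m hm
      obtain ⟨hRsub, hQ⟩ := hRfact R hR
      rw [st6_inter_high (by omega) hRsub]
      rcases le_or_gt (t+2*s+I+1) m with h | h
      · have hj : m ∈ Finset.Icc (t+2*s+I+1) n := Finset.mem_Icc.mpr ⟨h, hm⟩
        have hnc : ¬ (m + 1 + 0 ≤ 2 * (R ∩ Finset.Icc (t+2*s+I+1) m).card + (t+2*s+I+1)) := by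
          intro hcon; exact hQ ⟨m, hj, hcon⟩
        omega
      · have hemp : R ∩ Finset.Icc (t+2*s+I+1) m = ∅ := by
          ext y
          simp only [Finset.mem_inter, Finset.mem_Icc, Finset.notMem_empty, iff_false, not_and]
          intro _ h1 h2; omega
        rw [hemp]; simp
    have hdisjTM : ∀ T ∈ AT, Disjoint T (Finset.Icc (t+s) (t+2*s)) := by
      intro T hT
      rw [Finset.disjoint_left]
      intro y hy hy'
      have h1 := (hTfact T hT).1 hy
      simp only [Finset.mem_Icc] at h1 hy'
      omega
    have hdisjTMR : ∀ T ∈ AT, ∀ R ∈ AR, Disjoint (T ∪ Finset.Icc (t+s) (t+2*s)) R := by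
      intro T hT R hR
      rw [Finset.disjoint_left]
      intro y hy hy'
      have h2 := (hRfact R hR).1 hy'
      simp only [Finset.mem_Icc] at h2
      rcases Finset.mem_union.mp hy with h3 | h3
      · have h4 := (hTfact T hT).1 h3
        simp only [Finset.mem_Icc] at h4
        omega
      · simp only [Finset.mem_Icc] at h3
        omega
    have hcardE : ∀ T ∈ AT, ∀ R ∈ AR,
        (T ∪ Finset.Icc (t+s) (t+2*s) ∪ R).card = (t+s) + R.card := by
      intro T hT R hR
      rw [Finset.card_union_of_disjoint (hdisjTMR T hT R hR),
        Finset.card_union_of_disjoint (hdisjTM T hT), (hTfact T hT).2, Nat.card_Icc]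
      omega
    have hEsub : ∀ T ∈ AT, ∀ R ∈ AR,
        T ∪ Finset.Icc (t+s) (t+2*s) ∪ R ⊆ Finset.Icc 1 n := by
      intro T hT R hR
      refine Finset.union_subset (Finset.union_subset ?_ ?_) ?_
      · exact subset_trans (hTfact T hT).1 (Finset.Icc_subset_Icc (le_refl 1) (by omega))
      · exact Finset.Icc_subset_Icc (by omega) (by omega)
      · exact subset_trans (hRfact R hR).1 (Finset.Icc_subset_Icc (by omega) (le_refl n))
    have hEFF : ∀ T ∈ AT, ∀ R ∈ AR,
        (T ∪ Finset.Icc (t+s) (t+2*s) ∪ R) ∈ FF n t s := by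
      intro T hT R hR
      simp only [FF, Finset.mem_filter, Finset.mem_powerset]
      refine ⟨hEsub T hT R hR, ?_⟩
      have hsub : T ∪ Finset.Icc (t+s) (t+2*s)
          ⊆ (T ∪ Finset.Icc (t+s) (t+2*s) ∪ R) ∩ Finset.Icc 1 (t + 2*s) := by
        intro y hy
        refine Finset.mem_inter.mpr ⟨Finset.mem_union_left _ hy, ?_⟩
        rcases Finset.mem_union.mp hy with h3 | h3
        · have h4 := (hTfact T hT).1 h3
          simp only [Finset.mem_Icc] at h4 ⊢
          omega
        · simp only [Finset.mem_Icc] at h3 ⊢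
          omega
      have hc1 := Finset.card_le_card hsub
      rw [Finset.card_union_of_disjoint (hdisjTM T hT), (hTfact T hT).2, Nat.card_Icc] at hc1
      omega
    have hEprof : ∀ T ∈ AT, ∀ R ∈ AR, ∀ m, m ≤ n →
        ((T ∪ Finset.Icc (t+s) (t+2*s) ∪ R) ∩ Finset.Icc 1 m).card
          ≤ (DD n t s (I+1) ∩ Finset.Icc 1 m).card := by
      intro T hT R hR m hm
      have h1 : (T ∪ Finset.Icc (t+s) (t+2*s) ∪ R) ∩ Finset.Icc 1 m
          = ((T ∩ Finset.Icc 1 m) ∪ (Finset.Icc (t+s) (t+2*s) ∩ Finset.Icc 1 m))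
            ∪ (R ∩ Finset.Icc 1 m) := by
        rw [Finset.union_inter_distrib_right, Finset.union_inter_distrib_right]
      have h2 : ((T ∪ Finset.Icc (t+s) (t+2*s) ∪ R) ∩ Finset.Icc 1 m).card
          ≤ (T ∩ Finset.Icc 1 m).card + (Finset.Icc (t+s) (t+2*s) ∩ Finset.Icc 1 m).card
            + (R ∩ Finset.Icc 1 m).card := by
        rw [h1]
        refine le_trans (Finset.card_union_le _ _) ?_
        exact Nat.add_le_add_right (Finset.card_union_le _ _) _
      have hT1 : (T ∩ Finset.Icc 1 m).card ≤ min (t-1) m := by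
        refine le_min ?_ (st6_pf_le T m)
        calc (T ∩ Finset.Icc 1 m).card ≤ T.card := Finset.card_le_card Finset.inter_subset_left
          _ = t - 1 := (hTfact T hT).2
      have hM1 := st6_Icc_inter_card (t+s) (t+2*s) m
      have hR1 := hRprof R hR m hm
      have hDDc := st6_DD_card (n := n) (t := t) (s := s) ht (i := I+1) (by omega) hm
      omega
    have hEnotA : ∀ T ∈ AT, ∀ R ∈ AR, (T ∪ Finset.Icc (t+s) (t+2*s) ∪ R) ∉ 𝓐 := by
      intro T hT R hR hcon
      exact hD' (dom_mem hA hSA hMA _ _ hcon rfl (DD n t s (I+1))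
        (st6_DD_subset ht (by omega) (I+1)) (hEprof T hT R hR))
    have hEEsub : EE ⊆ FF n t s \ 𝓐 := by
      intro E hE
      rw [hEEdef] at hE
      obtain ⟨TR, hTR, rfl⟩ := Finset.mem_image.mp hE
      obtain ⟨hT, hR⟩ := Finset.mem_product.mp hTR
      exact Finset.mem_sdiff.mpr ⟨hEFF _ hT _ hR, hEnotA _ hT _ hR⟩
    -- reconstruction lemmas for injectivity
    have hrecT : ∀ T ∈ AT, ∀ R ∈ AR,
        (T ∪ Finset.Icc (t+s) (t+2*s) ∪ R) ∩ Finset.Icc 1 (t+s-1) = T := by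
      intro T hT R hR
      ext y
      simp only [Finset.mem_inter, Finset.mem_union, Finset.mem_Icc]
      constructor
      · rintro ⟨(hy | hy) | hy, h1, h2⟩
        · exact hy
        · exfalso; omega
        · exfalso
          have h3 := (hRfact R hR).1 hy
          simp only [Finset.mem_Icc] at h3
          omega
      · intro hy
        have h3 := (hTfact T hT).1 hy
        simp only [Finset.mem_Icc] at h3
        exact ⟨Or.inl (Or.inl hy), h3.1, h3.2⟩
    have hrecR : ∀ T ∈ AT, ∀ R ∈ AR,
        (T ∪ Finset.Icc (t+s) (t+2*s) ∪ R) ∩ Finset.Icc (t+2*s+I+1) n = R := by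
      intro T hT R hR
      ext y
      simp only [Finset.mem_inter, Finset.mem_union, Finset.mem_Icc]
      constructor
      · rintro ⟨(hy | hy) | hy, h1, h2⟩
        · exfalso
          have h3 := (hTfact T hT).1 hy
          simp only [Finset.mem_Icc] at h3
          omega
        · exfalso; omega
        · exact hy
      · intro hy
        have h3 := (hRfact R hR).1 hy
        simp only [Finset.mem_Icc] at h3
        exact ⟨Or.inr hy, h3.1, h3.2⟩
    have hinj : ∀ x ∈ AT ×ˢ AR, ∀ y ∈ AT ×ˢ AR,
        (x.1 ∪ Finset.Icc (t+s) (t+2*s) ∪ x.2) = (y.1 ∪ Finset.Icc (t+s) (t+2*s) ∪ y.2)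
          → x = y := by
      intro x hx y hy heq
      obtain ⟨hx1, hx2⟩ := Finset.mem_product.mp hx
      obtain ⟨hy1, hy2⟩ := Finset.mem_product.mp hy
      have e1 : x.1 = y.1 := by
        rw [← hrecT x.1 hx1 x.2 hx2, ← hrecT y.1 hy1 y.2 hy2, heq]
      have e2 : x.2 = y.2 := by
        rw [← hrecR x.1 hx1 x.2 hx2, ← hrecR y.1 hy1 y.2 hy2, heq]
      exact Prod.ext e1 e2
    -- the weight of EE
    have hmu1 : mu n p EE = ∑ TR ∈ AT ×ˢ AR,
        (p^((TR.1 ∪ Finset.Icc (t+s) (t+2*s) ∪ TR.2).card)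
          * (1-p)^(n - (TR.1 ∪ Finset.Icc (t+s) (t+2*s) ∪ TR.2).card)) := by
      rw [hEEdef]
      unfold mu
      exact Finset.sum_image hinj
    have hterm : ∀ TR ∈ AT ×ˢ AR,
        (p^((TR.1 ∪ Finset.Icc (t+s) (t+2*s) ∪ TR.2).card)
          * (1-p)^(n - (TR.1 ∪ Finset.Icc (t+s) (t+2*s) ∪ TR.2).card))
        = (p^(t+s) * (1-p)^(s+I))
            * (p^(TR.2.card) * (1-p)^((n - (t+2*s+I)) - TR.2.card)) := by
      intro TR hTR
      obtain ⟨hT, hR⟩ := Finset.mem_product.mp hTR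
      have hc := hcardE TR.1 hT TR.2 hR
      have hRle : TR.2.card ≤ n - (t+2*s+I) := by
        have h4 := Finset.card_le_card (hRfact TR.2 hR).1
        rw [Nat.card_Icc] at h4
        omega
      rw [hc, pow_add,
        show n - (t+s+TR.2.card) = (s+I) + ((n - (t+2*s+I)) - TR.2.card) by omega, pow_add]
      ring
    have hmu2 : mu n p EE = (AT.card : ℝ) * ((p^(t+s) * (1-p)^(s+I))
        * (∑ R ∈ AR, p^(R.card) * (1-p)^((n - (t+2*s+I)) - R.card))) := by
      rw [hmu1, Finset.sum_congr rfl hterm, Finset.sum_product]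
      have hinner : ∀ T ∈ AT,
          (∑ R ∈ AR, (p^(t+s) * (1-p)^(s+I))
            * (p^(R.card) * (1-p)^((n - (t+2*s+I)) - R.card)))
          = (p^(t+s) * (1-p)^(s+I))
            * (∑ R ∈ AR, p^(R.card) * (1-p)^((n - (t+2*s+I)) - R.card)) := by
        intro T _
        rw [← Finset.mul_sum]
      rw [Finset.sum_congr rfl hinner, Finset.sum_const, nsmul_eq_mul]
    -- lower bound for the R-sum
    have hWR : (1:ℝ) - 2*p ≤ ∑ R ∈ AR, p^(R.card) * (1-p)^((n - (t+2*s+I)) - R.card) := by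
      have hsplit := Finset.sum_filter_add_sum_filter_not
        ((Finset.Icc (t+2*s+I+1) n).powerset) (fun R => RP (t+2*s+I+1) n 0 R)
        (fun R => p^(R.card) * (1-p)^((n - (t+2*s+I)) - R.card))
      have hall : (∑ R ∈ (Finset.Icc (t+2*s+I+1) n).powerset,
          p^(R.card) * (1-p)^((n - (t+2*s+I)) - R.card)) = 1 := by
        have h0 := st6_wsum_one p (Finset.Icc (t+2*s+I+1) n)
        rw [Nat.card_Icc] at h0
        calc (∑ R ∈ (Finset.Icc (t+2*s+I+1) n).powerset,
              p^(R.card) * (1-p)^((n - (t+2*s+I)) - R.card))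
            = ∑ R ∈ (Finset.Icc (t+2*s+I+1) n).powerset,
              p^(R.card) * (1-p)^(n + 1 - (t+2*s+I+1) - R.card) := by
              refine Finset.sum_congr rfl fun F hF => ?_
              rw [show (n - (t+2*s+I)) - F.card = n + 1 - (t+2*s+I+1) - F.card by omega]
          _ = 1 := h0
      have hRPsum : (∑ R ∈ (Finset.Icc (t+2*s+I+1) n).powerset.filter
            (fun R => RP (t+2*s+I+1) n 0 R),
          p^(R.card) * (1-p)^((n - (t+2*s+I)) - R.card)) = SW p (t+2*s+I+1) n 0 := by
        rw [SW_def, Finset.sum_filter]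
        refine Finset.sum_congr rfl fun F hF => ?_
        rw [show (n - (t+2*s+I)) - F.card = n + 1 - (t+2*s+I+1) - F.card by omega]
      have hSW := SW0_le hp hp' (t+2*s+I+1) n
      rw [hARdef]
      linarith
    -- put it together
    have hfin1 : mu n p EE ≤ mu n p (FF n t s \ 𝓐) := st6_mu_mono n hp hp' hEEsub
    have hATcard : AT.card = Nat.choose (t+s-1) s := by
      rw [hATdef, Finset.card_powersetCard, Nat.card_Icc]
      have h2 : (t+s-1).choose s = (t+s-1).choose (t-1) := by
        have h3 := Nat.choose_symm (show t-1 ≤ t+s-1 by omega)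
        rwa [show t+s-1-(t-1) = s by omega] at h3
      rw [show t+s-1+1-1 = t+s-1 by omega, ← h2]
    have halg : (Nat.choose (t+s-1) s : ℝ) * p^(t+s) * (1-p)^(s+I+1) * (1 - p/(1-p))
        = (Nat.choose (t+s-1) s : ℝ) * ((p^(t+s) * (1-p)^(s+I)) * (1 - 2*p)) := by
      rw [show s+I+1 = (s+I)+1 from rfl, pow_succ]
      have hne : (1:ℝ) - p ≠ 0 := ne_of_gt hq0
      field_simp
      ring
    have hpos : (0:ℝ) ≤ p^(t+s) * (1-p)^(s+I) := by positivity
    have hle2 : (Nat.choose (t+s-1) s : ℝ) * ((p^(t+s) * (1-p)^(s+I)) * (1 - 2*p))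
        ≤ (AT.card : ℝ) * ((p^(t+s) * (1-p)^(s+I))
          * (∑ R ∈ AR, p^(R.card) * (1-p)^((n - (t+2*s+I)) - R.card))) := by
      rw [hATcard]
      refine mul_le_mul_of_nonneg_left ?_ (by positivity)
      exact mul_le_mul_of_nonneg_left hWR hpos
    rw [halg]
    rw [← hmu2] at hle2
    linarith
  · -- ===================== PART 2 =====================
    have hsub2 : 𝓑 \ FF n t s
        ⊆ (Finset.Icc 1 n).powerset.filter (fun F => RP 1 n (t+I) F) := by
      intro B hBmem
      obtain ⟨hB𝓑, hBnot⟩ := Finset.mem_sdiff.mp hBmem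
      have hBsub := Finset.mem_powerset.mp (hB hB𝓑)
      have hBF : ¬ (t + s ≤ (B ∩ Finset.Icc 1 (t + 2*s)).card) := by
        intro hcon
        refine hBnot ?_
        simp only [FF, Finset.mem_filter, Finset.mem_powerset]
        exact ⟨hBsub, hcon⟩
      have hreach := st6_part2_reach n t s I ht hn hA hSA hMA hcross hDI hI1 hB𝓑 hBsub
        (by omega)
      obtain ⟨j, hj, hcond⟩ := hreach
      have hj1 : 1 ≤ j := by
        rcases Nat.eq_zero_or_pos j with rfl | h
        · exfalso
          have h0 : Finset.Icc 1 0 = (∅ : Finset ℕ) := by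
            ext y; simp [Finset.mem_Icc]
          rw [h0, Finset.inter_empty] at hcond
          simp only [Finset.card_empty] at hcond
          omega
        · exact h
      refine Finset.mem_filter.mpr ⟨Finset.mem_powerset.mpr hBsub, ?_⟩
      exact ⟨j, Finset.mem_Icc.mpr ⟨hj1, hj⟩, by omega⟩
    have h1 : mu n p (𝓑 \ FF n t s)
        ≤ mu n p ((Finset.Icc 1 n).powerset.filter (fun F => RP 1 n (t+I) F)) :=
      st6_mu_mono n hp hp' hsub2
    have h2 : mu n p ((Finset.Icc 1 n).powerset.filter (fun F => RP 1 n (t+I) F))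
        = SW p 1 n (t+I) := by
      unfold mu
      rw [SW_def, Finset.sum_filter]
      refine Finset.sum_congr rfl fun F hF => ?_
      rw [show n + 1 - 1 - F.card = n - F.card by omega]
    have h3 := SW_le hp hp' (n + 1 - 1) 1 n (t+I) (le_refl _) (by omega)
    linarith
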